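/- Define c(v) = (1/2)·[((λ₂/√2)^{n-1})·λ₁^{2|v|} + ((λ₁/√2)^{n-1})·λ₂^{2|v|}] for v ∈ ℤ₂ⁿ, with λ₁ = e^{iπ/4}, λ₂ = e^{-iπ/4}. Then Σ_{v ∈ ℤ₂ⁿ, vₙ = 0} c(v) · (((-i)^{|v|} + i^{|v|})/2) = ((√2·λ₁)^{n-1} + (√2·λ₂)^{n-1})/4 for every n ≥ 2. -/
import Mathlib

open Complex Finset

lemma sum_neg_one_pow_aux (m : ℕ) :
    ∑ w : Fin (m + 1) → Fin 2, (-1 : ℂ) ^ (∑ i, (w i : ℕ)) = 0 := by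
  have h : ∀ w : Fin (m + 1) → Fin 2, (-1 : ℂ) ^ (∑ i, (w i : ℕ)) =
      ∏ i, (-1 : ℂ) ^ (w i : ℕ) := fun w =>
    (Finset.prod_pow_eq_pow_sum univ _ _).symm
  simp_rw [h]
  rw [← Fintype.piFinset_univ, ← Finset.prod_univ_sum (fun _ => (univ : Finset (Fin 2)))
    (fun _ j => (-1 : ℂ) ^ (j : ℕ))]
  simp [Fin.sum_univ_two]

theorem stmt8 (n : ℕ) (hn : 2 ≤ n) :
    let lam1 : ℂ := (1 + I) / (Real.sqrt 2 : ℂ)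
    let lam2 : ℂ := (1 - I) / (Real.sqrt 2 : ℂ)
    let c : (Fin n → Fin 2) → ℂ := fun v =>
      (1 / 2) * ((lam2 / (Real.sqrt 2 : ℂ)) ^ (n - 1) * lam1 ^ (2 * ∑ i, (v i : ℕ)) +
        (lam1 / (Real.sqrt 2 : ℂ)) ^ (n - 1) * lam2 ^ (2 * ∑ i, (v i : ℕ)))
    ∑ v ∈ Finset.univ.filter (fun v : Fin n → Fin 2 => v ⟨n - 1, by omega⟩ = 0),
        c v * (((-I) ^ (∑ i, (v i : ℕ)) + I ^ (∑ i, (v i : ℕ))) / 2) =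
      (((Real.sqrt 2 : ℂ) * lam1) ^ (n - 1) + ((Real.sqrt 2 : ℂ) * lam2) ^ (n - 1)) / 4 := by
  intro lam1 lam2 c
  obtain ⟨m, rfl⟩ : ∃ m, n = m + 2 := ⟨n - 2, by omega⟩
  have hs2 : (Real.sqrt 2 : ℂ) ^ 2 = 2 := by
    rw [← Complex.ofReal_pow, Real.sq_sqrt (by norm_num : (0:ℝ) ≤ 2)]
    norm_num
  have hs0 : (Real.sqrt 2 : ℂ) ≠ 0 := by
    simpa using (Real.sqrt_pos.mpr (by norm_num : (0:ℝ) < 2)).ne'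
  have h1 : lam1 ^ 2 = I := by
    show ((1 + I) / (Real.sqrt 2 : ℂ)) ^ 2 = I
    rw [div_pow, hs2]
    have : (1 + I) ^ 2 = 2 * I := by
      have := I_sq
      ring_nf
      linear_combination I_sq
    rw [this]; ring
  have h2 : lam2 ^ 2 = -I := by
    show ((1 - I) / (Real.sqrt 2 : ℂ)) ^ 2 = -I
    rw [div_pow, hs2]
    have : (1 - I) ^ 2 = -(2 * I) := by linear_combination I_sq
    rw [this]; ring
  set A : ℂ := (lam2 / (Real.sqrt 2 : ℂ)) ^ (m + 1) with hA
  set B : ℂ := (lam1 / (Real.sqrt 2 : ℂ)) ^ (m + 1) with hB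
  have key : ∀ k : ℕ,
      (1 / 2 : ℂ) * (A * lam1 ^ (2 * k) + B * lam2 ^ (2 * k)) * (((-I) ^ k + I ^ k) / 2)
        = (A + B) / 4 * (1 + (-1) ^ k) := by
    intro k
    have e1 : lam1 ^ (2 * k) = I ^ k := by rw [pow_mul, h1]
    have e2 : lam2 ^ (2 * k) = (-I) ^ k := by rw [pow_mul, h2]
    have e3 : I ^ k * (-I) ^ k = 1 := by
      rw [← mul_pow, mul_neg, I_mul_I, neg_neg, one_pow]
    have e4 : I ^ k * I ^ k = (-1 : ℂ) ^ k := by rw [← mul_pow, I_mul_I]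
    have e5 : (-I) ^ k * (-I) ^ k = (-1 : ℂ) ^ k := by
      rw [← mul_pow, neg_mul_neg, I_mul_I]
    rw [e1, e2]
    linear_combination (A / 4 + B / 4) * e3 + A / 4 * e4 + B / 4 * e5
  -- reindex the filtered sum
  have hidx : (⟨m + 2 - 1, by omega⟩ : Fin (m + 2)) = Fin.last (m + 1) := rfl
  have hreindex :
      ∑ v ∈ Finset.univ.filter (fun v : Fin (m + 2) → Fin 2 => v ⟨m + 2 - 1, by omega⟩ = 0),
          c v * (((-I) ^ (∑ i, (v i : ℕ)) + I ^ (∑ i, (v i : ℕ))) / 2)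
        = ∑ w : Fin (m + 1) → Fin 2, (A + B) / 4 * (1 + (-1) ^ (∑ i, (w i : ℕ))) := by
    refine Finset.sum_nbij' (fun v => Fin.init v) (fun w => Fin.snoc w 0) ?_ ?_ ?_ ?_ ?_
    · intro a _; exact mem_univ _
    · intro w _
      simp only [mem_filter, mem_univ, true_and]
      exact Fin.snoc_last _ _
    · intro v hv
      simp only [mem_filter, hidx] at hv
      rw [← hv.2]
      exact Fin.snoc_init_self v
    · intro w _
      simp
    · intro v hv
      have hsum : ∑ i, (v i : ℕ) = ∑ i, ((Fin.init v) i : ℕ) := by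
        simp only [mem_filter, hidx] at hv
        rw [Fin.sum_univ_castSucc]
        simp [Fin.init, hv.2]
      rw [show c v = (1 / 2 : ℂ) * (A * lam1 ^ (2 * ∑ i, (v i : ℕ)) +
          B * lam2 ^ (2 * ∑ i, (v i : ℕ))) from rfl, hsum, key]
  rw [hreindex]
  rw [← Finset.mul_sum, Finset.sum_add_distrib, sum_neg_one_pow_aux]
  simp only [Finset.sum_const, Finset.card_univ, nsmul_eq_mul, add_zero]
  have hcard : (Fintype.card (Fin (m + 1) → Fin 2) : ℂ) = 2 ^ (m + 1) := by
    simp [Fintype.card_fun]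
  rw [hcard]
  have hApow : (2 : ℂ) ^ (m + 1) * A = ((Real.sqrt 2 : ℂ) * lam2) ^ (m + 1) := by
    have h2d : (2 : ℂ) / (Real.sqrt 2 : ℂ) = (Real.sqrt 2 : ℂ) := by
      rw [div_eq_iff hs0]; linear_combination -hs2
    rw [hA, ← mul_pow]
    congr 1
    rw [show (2 : ℂ) * (lam2 / (Real.sqrt 2 : ℂ)) = (2 / (Real.sqrt 2 : ℂ)) * lam2 from by ring,
      h2d]
  have hBpow : (2 : ℂ) ^ (m + 1) * B = ((Real.sqrt 2 : ℂ) * lam1) ^ (m + 1) := by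
    have h2d : (2 : ℂ) / (Real.sqrt 2 : ℂ) = (Real.sqrt 2 : ℂ) := by
      rw [div_eq_iff hs0]; linear_combination -hs2
    rw [hB, ← mul_pow]
    congr 1
    rw [show (2 : ℂ) * (lam1 / (Real.sqrt 2 : ℂ)) = (2 / (Real.sqrt 2 : ℂ)) * lam1 from by ring,
      h2d]
  have : (m + 2 - 1) = m + 1 := rfl
  rw [this]
  linear_combination (1/4 : ℂ) * hApow + (1/4 : ℂ) * hBpow
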